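/- Let K be a nonempty compact convex subset of ℝⁿ and let x : [0, ∞) → ℝⁿ be locally Lipschitz with x(0) ∈ K. Suppose that for almost every t ≥ 0 the derivative x′(t) exists and equals b(t) − x(t) for some b(t) ∈ K. Then x(t) ∈ K for all t ≥ 0. -/

import Mathlib

open scoped InnerProductSpace
open MeasureTheory Set Filter Topology

private lemma lip_singleton {E : Type*} [PseudoMetricSpace E] (f : ℝ → E) (a : ℝ) :
    LipschitzOnWith 0 f {a} := by
  rw [lipschitzOnWith_iff_dist_le_mul]
  rintro s rfl t rfl
  simp

private lemma lip_glue {E : Type*} [PseudoMetricSpace E] {f : ℝ → E} {C1 C2 : NNReal}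
    {a b c : ℝ} (hab : a ≤ b) (hbc : b ≤ c)
    (h1 : LipschitzOnWith C1 f (Icc a b)) (h2 : LipschitzOnWith C2 f (Icc b c)) :
    LipschitzOnWith (max C1 C2) f (Icc a c) := by
  rw [lipschitzOnWith_iff_dist_le_mul] at h1 h2 ⊢
  have hC1 : (C1 : ℝ) ≤ (max C1 C2 : NNReal) := by exact_mod_cast le_max_left C1 C2
  have hC2 : (C2 : ℝ) ≤ (max C1 C2 : NNReal) := by exact_mod_cast le_max_right C1 C2
  have key : ∀ s ∈ Icc a c, ∀ t ∈ Icc a c, s ≤ t →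
      dist (f s) (f t) ≤ (max C1 C2 : NNReal) * dist s t := by
    intro s hs t ht hst
    rcases le_total t b with h | h
    · calc dist (f s) (f t) ≤ C1 * dist s t := h1 s ⟨hs.1, hst.trans h⟩ t ⟨hs.1.trans hst, h⟩
        _ ≤ (max C1 C2 : NNReal) * dist s t := mul_le_mul_of_nonneg_right hC1 dist_nonneg
    rcases le_total b s with h' | h'
    · calc dist (f s) (f t) ≤ C2 * dist s t := h2 s ⟨h', hs.2⟩ t ⟨h'.trans hst, ht.2⟩
        _ ≤ (max C1 C2 : NNReal) * dist s t := mul_le_mul_of_nonneg_right hC2 dist_nonneg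
    · have d1 : dist (f s) (f b) ≤ C1 * (b - s) := by
        have := h1 s ⟨hs.1, h'⟩ b ⟨hab, le_rfl⟩
        rwa [Real.dist_eq, abs_of_nonpos (by linarith), neg_sub] at this
      have d2 : dist (f b) (f t) ≤ C2 * (t - b) := by
        have := h2 b ⟨le_rfl, hbc⟩ t ⟨h, ht.2⟩
        rwa [Real.dist_eq, abs_of_nonpos (by linarith), neg_sub] at this
      have hds : dist s t = t - s := by
        rw [Real.dist_eq, abs_of_nonpos (by linarith), neg_sub]
      calc dist (f s) (f t) ≤ dist (f s) (f b) + dist (f b) (f t) := dist_triangle _ _ _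
        _ ≤ C1 * (b - s) + C2 * (t - b) := add_le_add d1 d2
        _ ≤ (max C1 C2 : NNReal) * (b - s) + (max C1 C2 : NNReal) * (t - b) := by
            have hbs : (0:ℝ) ≤ b - s := by linarith
            have htb : (0:ℝ) ≤ t - b := by linarith
            exact add_le_add (mul_le_mul_of_nonneg_right hC1 hbs)
              (mul_le_mul_of_nonneg_right hC2 htb)
        _ = (max C1 C2 : NNReal) * dist s t := by rw [hds]; ring
  intro s hs t ht
  rcases le_total s t with h | h
  · exact key s hs t ht h
  · rw [dist_comm, dist_comm s t]
    exact key t ht s hs h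

/-- A locally Lipschitz function on `ℝ` is Lipschitz on every compact interval. -/
private lemma locallyLipschitz_lipschitzOnWith_Icc {E : Type*} [PseudoMetricSpace E]
    {f : ℝ → E} (hf : LocallyLipschitz f) (a b : ℝ) :
    ∃ C : NNReal, LipschitzOnWith C f (Icc a b) := by
  rcases lt_or_ge b a with hab | hab
  · exact ⟨0, by rw [Icc_eq_empty (not_le.mpr hab)]; exact lipschitzOnWith_empty 0 f⟩
  set S : Set ℝ := {t | t ∈ Icc a b ∧ ∃ C : NNReal, LipschitzOnWith C f (Icc a t)} with hS
  have haS : a ∈ S := ⟨⟨le_rfl, hab⟩, 0, by rw [Icc_self]; exact lip_singleton f a⟩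
  have hbdd : BddAbove S := ⟨b, fun t ht => ht.1.2⟩
  set c := sSup S with hc
  have hac : a ≤ c := le_csSup hbdd haS
  have hcb : c ≤ b := csSup_le ⟨a, haS⟩ (fun t ht => ht.1.2)
  obtain ⟨C0, s, hs_mem, hC0⟩ := hf c
  obtain ⟨δ, hδ, hball⟩ := Metric.mem_nhds_iff.mp hs_mem
  set a' := max a (c - δ/2) with ha'
  set b' := min b (c + δ/2) with hb'
  have haa' : a ≤ a' := le_max_left _ _
  have ha'c : a' ≤ c := max_le hac (by linarith)
  have hcb' : c ≤ b' := le_min hcb (by linarith)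
  have hmid : LipschitzOnWith C0 f (Icc a' b') := by
    apply hC0.mono
    intro z hz
    apply hball
    rw [Metric.mem_ball, Real.dist_eq]
    have h1 : c - δ/2 ≤ z := le_trans (le_max_right a _) hz.1
    have h2 : z ≤ c + δ/2 := hz.2.trans (min_le_right b _)
    have : |z - c| ≤ δ/2 := abs_le.mpr ⟨by linarith, by linarith⟩
    linarith
  have hleft : ∃ C1 : NNReal, LipschitzOnWith C1 f (Icc a a') := by
    rcases eq_or_lt_of_le haa' with h | h
    · exact ⟨0, by rw [← h, Icc_self]; exact lip_singleton f a⟩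
    · have ha'lt : a' < c := by
        rcases lt_or_ge a' c with h' | h'
        · exact h'
        · exfalso
          have : a' = c := le_antisymm ha'c h'
          have : a = c := by
            rcases max_cases a (c - δ/2) with ⟨h1, _⟩ | ⟨h1, _⟩
            · rw [← ha'] at h1; rw [← h1, this]
            · rw [← ha'] at h1; rw [h1] at this; linarith
          rw [ha'] at h
          rw [← this] at h
          have : max a (a - δ/2) = a := max_eq_left (by linarith)
          rw [this] at h
          exact lt_irrefl a h
      obtain ⟨t, htS, hta'⟩ := exists_lt_of_lt_csSup ⟨a, haS⟩ ha'lt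
      obtain ⟨_, C1, h1⟩ := htS
      exact ⟨C1, h1.mono (Icc_subset_Icc_right hta'.le)⟩
  obtain ⟨C1, h1⟩ := hleft
  have hIccb' : LipschitzOnWith (max C1 C0) f (Icc a b') :=
    lip_glue haa' (ha'c.trans hcb') h1 hmid
  have hb'S : b' ∈ S := ⟨⟨hac.trans hcb', min_le_left _ _⟩, max C1 C0, hIccb'⟩
  have hb'c : b' ≤ c := le_csSup hbdd hb'S
  have hceq : c = b := by
    by_contra hne
    have hlt : c < b := lt_of_le_of_ne hcb hne
    have : c < b' := lt_min hlt (by linarith)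
    linarith
  have hb'eq : b' = b := by
    rw [hb', hceq]
    exact min_eq_left (by linarith)
  exact ⟨max C1 C0, hb'eq ▸ hIccb'⟩

/-- Key analytic lemma: if `f` is Lipschitz on `[a, b]`, `f a ≤ 0`, and a.e. on `[a, b)` it has
a derivative that is nonpositive wherever `f` is nonnegative, then `f b ≤ 0`. -/
private lemma key_mono {f : ℝ → ℝ} {C : NNReal} {a b : ℝ} (hab : a ≤ b)
    (hf : LipschitzOnWith C f (Icc a b)) (hfa : f a ≤ 0)
    (hd : ∀ᵐ t ∂(volume : Measure ℝ), t ∈ Ico a b →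
      ∃ f' : ℝ, HasDerivAt f f' t ∧ (0 ≤ f t → f' ≤ 0)) :
    f b ≤ 0 := by
  have hCnn : (0:ℝ) ≤ (C:ℝ) := C.coe_nonneg
  have main : ∀ ε : ℝ, 0 < ε → f b ≤ ε * (b - a) + ((C:ℝ) + 1) * ε := by
    intro ε hε
    set N := {t : ℝ | ¬ (t ∈ Ico a b →
      ∃ f' : ℝ, HasDerivAt f f' t ∧ (0 ≤ f t → f' ≤ 0))} with hNdef
    have hNnull : volume N = 0 := ae_iff.mp hd
    obtain ⟨U, hNU, hUopen, hUvol⟩ := Set.exists_isOpen_lt_of_lt N (ENNReal.ofReal ε)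
      (by rw [hNnull]; exact ENNReal.ofReal_pos.mpr hε)
    set m : ℝ → ℝ := fun t => (volume (U ∩ Ioc a t)).toReal with hm
    have hUfin : ∀ t, volume (U ∩ Ioc a t) ≠ ⊤ := fun t =>
      (lt_of_le_of_lt (measure_mono inter_subset_left)
        (hUvol.trans ENNReal.ofReal_lt_top)).ne
    have madd : ∀ s t : ℝ, a ≤ s → s ≤ t → m t - m s = (volume (U ∩ Ioc s t)).toReal := by
      intro s t has hst
      have hsplit : U ∩ Ioc a t = (U ∩ Ioc a s) ∪ (U ∩ Ioc s t) := by
        rw [← inter_union_distrib_left, Ioc_union_Ioc_eq_Ioc has hst]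
      have hdisj : Disjoint (U ∩ Ioc a s) (U ∩ Ioc s t) :=
        (Set.Ioc_disjoint_Ioc_of_le le_rfl).mono inter_subset_right inter_subset_right
      have hmeas : volume (U ∩ Ioc a t) = volume (U ∩ Ioc a s) + volume (U ∩ Ioc s t) := by
        rw [hsplit]
        exact measure_union hdisj (hUopen.measurableSet.inter measurableSet_Ioc)
      have hst_fin : volume (U ∩ Ioc s t) ≠ ⊤ := by
        refine (lt_of_le_of_lt (measure_mono inter_subset_left)
          (hUvol.trans ENNReal.ofReal_lt_top)).ne
      simp only [hm]
      rw [hmeas, ENNReal.toReal_add (hUfin s) hst_fin]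
      ring
    have mlip : ∀ s t : ℝ, a ≤ s → s ≤ t → m t - m s ≤ t - s := by
      intro s t has hst
      rw [madd s t has hst]
      have hle : volume (U ∩ Ioc s t) ≤ ENNReal.ofReal (t - s) :=
        le_trans (measure_mono inter_subset_right) (le_of_eq Real.volume_Ioc)
      exact ENNReal.toReal_le_of_le_ofReal (by linarith) hle
    have mmono : ∀ s t : ℝ, a ≤ s → s ≤ t → m s ≤ m t := by
      intro s t has hst
      have := madd s t has hst
      have h0 : (0:ℝ) ≤ (volume (U ∩ Ioc s t)).toReal := ENNReal.toReal_nonneg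
      linarith
    have mzero : m a = 0 := by simp [hm]
    have mnn : ∀ t, 0 ≤ m t := fun t => ENNReal.toReal_nonneg
    have mbound : ∀ t, m t ≤ ε := by
      intro t
      exact ENNReal.toReal_le_of_le_ofReal hε.le
        (le_trans (measure_mono inter_subset_left) hUvol.le)
    have mbump : ∀ t u : ℝ, a ≤ t → t < u → Ioc t u ⊆ U → u - t ≤ m u - m t := by
      intro t u hat htu hsub
      rw [madd t u hat htu.le, inter_eq_right.mpr hsub, Real.volume_Ioc,
        ENNReal.toReal_ofReal (by linarith)]
    have mcont : ContinuousOn m (Icc a b) := by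
      have : LipschitzOnWith 1 m (Icc a b) := by
        rw [lipschitzOnWith_iff_dist_le_mul]
        have key : ∀ s ∈ Icc a b, ∀ t ∈ Icc a b, s ≤ t → dist (m s) (m t) ≤ 1 * dist s t := by
          intro s hs t ht hst
          have h1 := mlip s t hs.1 hst
          have h2 := mmono s t hs.1 hst
          rw [Real.dist_eq, Real.dist_eq, abs_of_nonpos (by linarith), neg_sub,
            abs_of_nonpos (by linarith), neg_sub]
          linarith
        intro s hs t ht
        rcases le_total s t with h | h
        · exact key s hs t ht h
        · rw [dist_comm, dist_comm s t]; exact key t ht s hs h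
      exact this.continuousOn
    set P : Set ℝ := {t | f t ≤ ε * (t - a) + ((C:ℝ) + 1) * m t} with hP
    have hclosed : IsClosed (P ∩ Icc a b) := by
      have hcont : ContinuousOn (fun t => (f t, ε * (t - a) + ((C:ℝ)+1) * m t)) (Icc a b) :=
        (hf.continuousOn).prodMk
          (((continuousOn_const.mul ((continuousOn_id).sub continuousOn_const)).add
            (continuousOn_const.mul mcont)))
      rw [inter_comm]
      exact hcont.preimage_isClosed_of_isClosed isClosed_Icc OrderClosedTopology.isClosed_le'
    have hsubset : Icc a b ⊆ P := by
      apply hclosed.Icc_subset_of_forall_exists_gt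
      · show f a ≤ ε * (a - a) + ((C:ℝ) + 1) * m a
        rw [mzero]
        simp only [sub_self, mul_zero, add_zero]
        linarith
      · rintro t ⟨htP, hta, htb⟩ y hy
        have htP' : f t ≤ ε * (t - a) + ((C:ℝ)+1) * m t := htP
        by_cases htN : t ∈ N
        · -- bad point: inside the open set U, use the Lipschitz bound
          obtain ⟨δ, hδpos, hball⟩ := Metric.isOpen_iff.mp hUopen t (hNU htN)
          set u := min (min y b) (t + δ/2) with hu
          have htu : t < u := lt_min (lt_min hy htb) (by linarith)
          have hub : u ≤ b := (min_le_left _ _).trans (min_le_right y b)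
          have huy : u ≤ y := (min_le_left _ _).trans (min_le_left y b)
          have hIocU : Ioc t u ⊆ U := by
            intro z hz
            apply hball
            rw [Metric.mem_ball, Real.dist_eq]
            have h1 : z ≤ t + δ/2 := hz.2.trans (min_le_right _ _)
            rw [abs_of_nonneg (by linarith [hz.1.le])]
            linarith
          have hfu : f u - f t ≤ (C:ℝ) * (u - t) := by
            have hd := (lipschitzOnWith_iff_dist_le_mul.mp hf) u ⟨hta.trans htu.le, hub⟩
              t ⟨hta, htb.le⟩
            rw [Real.dist_eq, Real.dist_eq] at hd
            have h1 : |u - t| = u - t := abs_of_nonneg (by linarith)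
            calc f u - f t ≤ |f u - f t| := le_abs_self _
              _ ≤ (C:ℝ) * |u - t| := hd
              _ = (C:ℝ) * (u - t) := by rw [h1]
          have hmu := mbump t u hta htu hIocU
          refine ⟨u, ?_, htu, huy⟩
          show f u ≤ ε * (u - a) + ((C:ℝ) + 1) * m u
          nlinarith [mul_nonneg (show (0:ℝ) ≤ (C:ℝ)+1 by linarith)
            (show (0:ℝ) ≤ m u - m t - (u - t) by linarith),
            mul_le_mul_of_nonneg_left (show t - a ≤ u - a by linarith) hε.le]
        · -- good point: a derivative exists
          obtain ⟨f', hder, himp⟩ := not_not.mp htN ⟨hta, htb⟩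
          by_cases hsign : 0 ≤ f t
          · have hf' : f' < ε := lt_of_le_of_lt (himp hsign) hε
            have hslope : Tendsto (slope f t) (𝓝[>] t) (𝓝 f') :=
              (hasDerivAt_iff_tendsto_slope.mp hder).mono_left
                (nhdsWithin_mono _ (fun z hz => ne_of_gt hz))
            have h1 : ∀ᶠ z in 𝓝[>] t, slope f t z < ε := hslope.eventually_lt_const hf'
            have h2 : Ioc t (min y b) ∈ 𝓝[>] t := Ioc_mem_nhdsGT (lt_min hy htb)
            obtain ⟨u, hu1, hu2⟩ := (h1.and (eventually_of_mem h2 (fun z hz => hz))).exists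
            have htu : t < u := hu2.1
            have hub : u ≤ b := hu2.2.trans (min_le_right _ _)
            have hslope_ineq : f u - f t ≤ ε * (u - t) := by
              have hs : (f u - f t) / (u - t) < ε := by
                rw [slope_def_field] at hu1
                exact hu1
              have := (div_lt_iff₀ (by linarith)).mp hs
              linarith
            refine ⟨u, ?_, htu, hu2.2.trans (min_le_left _ _)⟩
            show f u ≤ ε * (u - a) + ((C:ℝ) + 1) * m u
            have hmm := mmono t u hta htu.le
            nlinarith [mul_nonneg (show (0:ℝ) ≤ (C:ℝ)+1 by linarith)
              (show (0:ℝ) ≤ m u - m t by linarith),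
              mul_le_mul_of_nonneg_left (show t - a ≤ u - a by linarith) hε.le]
          · push_neg at hsign
            have hcont : Tendsto f (𝓝[>] t) (𝓝 (f t)) := by
              have hc : ContinuousWithinAt f (Icc a b) t := hf.continuousOn t ⟨hta, htb.le⟩
              have : Tendsto f (𝓝[Ioc t b] t) (𝓝 (f t)) :=
                hc.mono_left (nhdsWithin_mono _ (fun z hz => ⟨hta.trans hz.1.le, hz.2⟩))
              rwa [nhdsWithin_Ioc_eq_nhdsGT htb] at this
            have h1 : ∀ᶠ u in 𝓝[>] t, f u < 0 := hcont.eventually_lt_const hsign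
            have h2 : Ioc t (min y b) ∈ 𝓝[>] t := Ioc_mem_nhdsGT (lt_min hy htb)
            obtain ⟨u, hu1, hu2⟩ := (h1.and (eventually_of_mem h2 (fun z hz => hz))).exists
            refine ⟨u, ?_, hu2.1, hu2.2.trans (min_le_left _ _)⟩
            show f u ≤ ε * (u - a) + ((C:ℝ) + 1) * m u
            have h3 : 0 ≤ ε * (u - a) := mul_nonneg hε.le (by linarith [hu2.1.le])
            have h4 : 0 ≤ ((C:ℝ)+1) * m u := mul_nonneg (by linarith) (mnn u)
            linarith
    have hbP : f b ≤ ε * (b - a) + ((C:ℝ) + 1) * m b := hsubset ⟨hab, le_rfl⟩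
    have := mul_le_mul_of_nonneg_left (mbound b) (show (0:ℝ) ≤ (C:ℝ)+1 by linarith)
    linarith
  by_contra hpos
  push_neg at hpos
  set D : ℝ := (b - a) + ((C:ℝ) + 1) with hD
  have hDpos : 0 < D := by
    have h1 : 0 ≤ b - a := by linarith
    rw [hD]; linarith
  have hεpos : 0 < f b / (D + 1) := div_pos hpos (by linarith)
  have hmain := main _ hεpos
  have heq : f b / (D+1) * (b - a) + ((C:ℝ)+1) * (f b / (D+1)) = f b * D / (D+1) := by
    rw [hD]; ring
  rw [heq] at hmain
  have h5 : f b * (D + 1) ≤ f b * D := by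
    have := (le_div_iff₀ (show (0:ℝ) < D + 1 by linarith)).mp hmain
    linarith
  nlinarith

/-- Forward invariance of a nonempty compact convex set `K` under the best
response dynamics: if `x` is locally Lipschitz, `x(0) ∈ K`, and for a.e. `t ≥ 0` the
derivative `x′(t)` exists and equals `b(t) − x(t)` for some `b(t) ∈ K`, then `x(t) ∈ K`
for all `t ≥ 0`. -/
theorem stmt_3 {n : ℕ} (K : Set (EuclideanSpace ℝ (Fin n)))
    (hKne : K.Nonempty) (hKcpt : IsCompact K) (hKconv : Convex ℝ K)
    (x : ℝ → EuclideanSpace ℝ (Fin n))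
    (hlip : LocallyLipschitz x) (hx0 : x 0 ∈ K)
    (hdyn : ∀ᵐ t ∂(volume.restrict (Set.Ici (0:ℝ))),
      ∃ b ∈ K, HasDerivAt x (b - x t) t) :
    ∀ t ≥ (0:ℝ), x t ∈ K := by
  intro T hT
  by_contra hxT
  have hKcl : IsClosed K := hKcpt.isClosed
  obtain ⟨φ, u, hphiK, hphix⟩ := geometric_hahn_banach_closed_point hKconv hKcl hxT
  set f : ℝ → ℝ := fun t => φ (x t) - u with hfdef
  obtain ⟨Cx, hCx⟩ := locallyLipschitz_lipschitzOnWith_Icc hlip 0 T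
  have hflip : LipschitzOnWith (‖φ‖₊ * Cx) f (Icc 0 T) := by
    have hcomp : LipschitzOnWith (‖φ‖₊ * Cx) (fun t => φ (x t)) (Icc 0 T) :=
      φ.lipschitz.comp_lipschitzOnWith hCx
    rw [lipschitzOnWith_iff_dist_le_mul] at hcomp ⊢
    intro s hs t ht
    have := hcomp s hs t ht
    simpa [hfdef, dist_sub_right] using this
  have hfae : ∀ᵐ t ∂(volume : Measure ℝ), t ∈ Ico 0 T →
      ∃ f' : ℝ, HasDerivAt f f' t ∧ (0 ≤ f t → f' ≤ 0) := by
    have h1 : ∀ᵐ t ∂(volume.restrict (Ico (0:ℝ) T)), ∃ b ∈ K, HasDerivAt x (b - x t) t :=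
      ae_restrict_of_ae_restrict_of_subset (fun z hz => hz.1) hdyn
    rw [ae_restrict_iff' measurableSet_Ico] at h1
    filter_upwards [h1] with t ht hmem
    obtain ⟨b, hbK, hder⟩ := ht hmem
    refine ⟨φ (b - x t), ?_, ?_⟩
    · have : HasDerivAt (fun s => φ (x s)) (φ (b - x t)) t :=
        φ.hasFDerivAt.comp_hasDerivAt t hder
      simpa [hfdef] using this.sub_const u
    · intro hge
      have hb : φ b < u := hphiK b hbK
      rw [map_sub]
      simp only [hfdef] at hge
      linarith
  have hf0 : f 0 ≤ 0 := by
    simp only [hfdef]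
    linarith [hphiK (x 0) hx0]
  have hfT : f T ≤ 0 := key_mono hT hflip hf0 hfae
  simp only [hfdef] at hfT
  linarith
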